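/- arXiv:0902.2467 — 2 statements merged into one kernel-verified Lean document; each statement's English description precedes it below -/
import Mathlib

section
/- Let A be a commutative ring and let I ⊆ J be ideals of A. Then ht(I) + ht(J/I) ≤ ht(J), where J/I denotes the image of J in the quotient ring A/I. -/
noncomputable section

/-- Height of an ideal: the infimum of the heights of the prime ideals containing it,
the height of a prime being taken in the prime spectrum ordered by inclusion. -/
def idealHt {R : Type*} [CommRing R] (I : Ideal R) : ℕ∞ :=
  ⨅ P : { P : PrimeSpectrum R // I ≤ P.asIdeal }, Order.height P.1

set_option maxHeartbeats 1000000 in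
lemma aux_head_add_length {α : Type*} [Preorder α] (q : LTSeries α) :
    Order.height q.head + q.length ≤ Order.height q.last := by
  have hne : Nonempty {p : LTSeries α // p.last = q.head} := ⟨RelSeries.singleton _ _, rfl⟩
  rw [Order.height_eq_iSup_last_eq, iSup_subtype', ENat.iSup_add]
  apply iSup_le
  rintro ⟨p, hp⟩
  have := Order.length_le_height_last (p := p.smash q hp)
  simpa using this

/-- For ideals `I ⊆ J` of a commutative ring `A`,
`ht I + ht (J/I) ≤ ht J`, where `J/I` is the image of `J` in `A/I`. -/
theorem stmt_4 (A : Type) [CommRing A] (I J : Ideal A) (hIJ : I ≤ J) :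
    idealHt I + idealHt (J.map (Ideal.Quotient.mk I)) ≤ idealHt J := by
  apply le_iInf
  rintro ⟨P, hP⟩
  have hIP : I ≤ P.asIdeal := hIJ.trans hP
  have hsurj : Function.Surjective (Ideal.Quotient.mk I) := Ideal.Quotient.mk_surjective
  have hker : RingHom.ker (Ideal.Quotient.mk I) = I := Ideal.mk_ker
  have hprime : (P.asIdeal.map (Ideal.Quotient.mk I)).IsPrime :=
    Ideal.map_isPrime_of_surjective hsurj (hker.le.trans hIP)
  set Pbar : PrimeSpectrum (A ⧸ I) := ⟨P.asIdeal.map (Ideal.Quotient.mk I), hprime⟩ with hPbar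
  have h1 : idealHt (J.map (Ideal.Quotient.mk I)) ≤ Order.height Pbar :=
    iInf_le (fun P : { P : PrimeSpectrum (A ⧸ I) // J.map (Ideal.Quotient.mk I) ≤ P.asIdeal } =>
      Order.height P.1) ⟨Pbar, Ideal.map_mono hP⟩
  refine le_trans (add_le_add_right h1 _) ?_
  -- now: idealHt I + height Pbar ≤ height P
  haveI : Nonempty {p : LTSeries (PrimeSpectrum (A ⧸ I)) // p.last = Pbar} :=
    ⟨RelSeries.singleton _ _, rfl⟩
  rw [Order.height_eq_iSup_last_eq Pbar, iSup_subtype', ENat.add_iSup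
    (ι := {p : LTSeries (PrimeSpectrum (A ⧸ I)) // p.last = Pbar})]
  apply iSup_le
  rintro ⟨q, hq⟩
  -- pull back the chain to Spec A
  have hmono : StrictMono (fun x : PrimeSpectrum (A ⧸ I) =>
      (⟨x.asIdeal.comap (Ideal.Quotient.mk I), inferInstance⟩ : PrimeSpectrum A)) := by
    intro x y hxy
    rw [← PrimeSpectrum.asIdeal_lt_asIdeal] at hxy ⊢
    exact lt_of_le_of_ne (Ideal.comap_mono hxy.le)
      (fun h => hxy.ne (Ideal.comap_injective_of_surjective _ hsurj h))
  set q' : LTSeries (PrimeSpectrum A) := q.map _ hmono with hq'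
  have hlast : q'.last = P := by
    have : q'.last = (⟨q.last.asIdeal.comap (Ideal.Quotient.mk I), inferInstance⟩ :
        PrimeSpectrum A) := LTSeries.last_map q _ hmono
    rw [this, hq]
    ext1
    show (P.asIdeal.map (Ideal.Quotient.mk I)).comap (Ideal.Quotient.mk I) = P.asIdeal
    rw [Ideal.comap_map_of_surjective _ hsurj, ← RingHom.ker_eq_comap_bot, hker,
      sup_eq_left.mpr hIP]
  have hheadI : I ≤ q'.head.asIdeal := by
    have : q'.head = (⟨q.head.asIdeal.comap (Ideal.Quotient.mk I), inferInstance⟩ :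
        PrimeSpectrum A) := LTSeries.head_map q _ hmono
    rw [this]
    calc I = RingHom.ker (Ideal.Quotient.mk I) := hker.symm
      _ ≤ q.head.asIdeal.comap (Ideal.Quotient.mk I) := Ideal.ker_le_comap _
  have h2 : idealHt I ≤ Order.height q'.head :=
    iInf_le (fun P : { P : PrimeSpectrum A // I ≤ P.asIdeal } =>
      Order.height P.1) ⟨q'.head, hheadI⟩
  calc idealHt I + (q.length : ℕ∞)
      ≤ Order.height q'.head + q'.length := by
        apply add_le_add h2
        simp [hq', RelSeries.map_length]
    _ ≤ Order.height q'.last := aux_head_add_length q'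
    _ = Order.height P := by rw [hlast]
end
end

section
/- Let A be an AF-domain. If A is catenarian, then the quotient A/p is an AF-domain for each prime ideal p of A. -/
open TensorProduct

noncomputable section

/-- Transcendence degree of the `R`-algebra `A` as a cardinal: the supremum of the
cardinalities of algebraically independent subsets of `A` over `R`. -/
def trdegC (R A : Type*) [CommRing R] [CommRing A] [Algebra R A] : Cardinal :=
  ⨆ s : { s : Set A // AlgebraicIndependent R ((↑) : s → A) }, Cardinal.mk s.1

/-- Transcendence degree of the `R`-algebra `A`, as an extended natural number. -/
def eTrdeg (R A : Type*) [CommRing R] [CommRing A] [Algebra R A] : ℕ∞ :=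
  Cardinal.toENat (trdegC R A)

/-- The extension `p[n]` of an ideal `p` of `A` to the polynomial ring
`A[X_1, ..., X_n]`. -/
def polyExt {A : Type*} [CommRing A] (n : ℕ) (p : Ideal A) : Ideal (MvPolynomial (Fin n) A) :=
  p.map (MvPolynomial.C : A →+* MvPolynomial (Fin n) A)

/-- An AF-domain over `k`: a `k`-algebra which is an integral domain such that
`ht p + t.d.(A/p) = t.d.(A)` for every prime ideal `p` of `A`. -/
def IsAFDomain (k A : Type*) [Field k] [CommRing A] [IsDomain A] [Algebra k A] : Prop :=
  ∀ p : Ideal A, p.IsPrime → idealHt p + eTrdeg k (A ⧸ p) = eTrdeg k A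

/-- A catenarian domain: `ht p + ht (q/p) = ht q` for all primes `p ⊆ q`. -/
def IsCatenarian (R : Type*) [CommRing R] : Prop :=
  ∀ p q : Ideal R, p.IsPrime → q.IsPrime → p ≤ q →
    idealHt p + idealHt (q.map (Ideal.Quotient.mk p)) = idealHt q


set_option maxHeartbeats 1000000 in
lemma trdegC_le_of_equiv {k A B : Type} [Field k] [CommRing A] [CommRing B]
    [Algebra k A] [Algebra k B] (e : A ≃ₐ[k] B) : trdegC k A ≤ trdegC k B := by
  refine ciSup_le' fun s => ?_
  have hs1 : AlgebraicIndependent k (fun x : s.1 => e.toAlgHom (x : A)) :=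
    s.2.map' e.injective
  have hs : AlgebraicIndependent k ((↑) : ((fun a => e.toAlgHom a) '' s.1) → B) :=
    hs1.image
  have h1 : Cardinal.mk s.1 = Cardinal.mk ((fun a => e.toAlgHom a) '' s.1) :=
    (Cardinal.mk_image_eq e.injective).symm
  rw [h1]
  exact le_ciSup (Cardinal.bddAbove_range _)
    (⟨(fun a => e.toAlgHom a) '' s.1, hs⟩ :
      { s : Set B // AlgebraicIndependent k ((↑) : s → B) })

lemma eTrdeg_congr {k A B : Type} [Field k] [CommRing A] [CommRing B]
    [Algebra k A] [Algebra k B] (e : A ≃ₐ[k] B) : eTrdeg k A = eTrdeg k B := by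
  unfold eTrdeg
  congr 1
  exact le_antisymm (trdegC_le_of_equiv e) (trdegC_le_of_equiv e.symm)

/-- If `A` is a catenarian AF-domain, then `A/p` is an AF-domain for each
prime ideal `p` of `A`. -/
theorem stmt_7 (k A : Type) [Field k] [CommRing A] [IsDomain A] [Algebra k A]
    (hfin : eTrdeg k A ≠ ⊤)
    (hAF : IsAFDomain k A) (hcat : IsCatenarian A)
    (p : Ideal A) [hp : p.IsPrime] :
    IsAFDomain k (A ⧸ p) := by
  intro q' hq'
  set q : Ideal A := q'.comap (Ideal.Quotient.mk p) with hqdef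
  haveI hq : q.IsPrime := hq'.comap _
  have hpq : p ≤ q := by
    intro x hx
    show Ideal.Quotient.mk p x ∈ q'
    rw [Ideal.Quotient.eq_zero_iff_mem.2 hx]
    exact q'.zero_mem
  have hmap : q.map (Ideal.Quotient.mk p) = q' :=
    Ideal.map_comap_of_surjective _ Ideal.Quotient.mk_surjective q'
  have hAFp := hAF p hp
  have hAFq := hAF q hq
  have hcatpq := hcat p q hp hq hpq
  have htop : idealHt p ≠ ⊤ := by
    intro h
    rw [h, top_add] at hAFp
    exact hfin hAFp.symm
  have hiso : eTrdeg k ((A ⧸ p) ⧸ q') = eTrdeg k (A ⧸ q) := by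
    have h2 : q.map (Ideal.Quotient.mkₐ k p) = q' := hmap
    exact h2 ▸ eTrdeg_congr (DoubleQuot.quotQuotEquivQuotOfLEₐ k hpq)
  apply WithTop.add_left_cancel htop
  show idealHt p + (idealHt q' + eTrdeg k ((A ⧸ p) ⧸ q')) = idealHt p + eTrdeg k (A ⧸ p)
  rw [← add_assoc, ← hmap]
  rw [hcatpq, hmap, hiso, hAFq, hAFp]
end
end
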